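/- Let c > 0 and let x, x' ∈ ℝ^{m+1} both be strictly positive with Σ_{j=0}^{m} x_j = Σ_{j=0}^{m} x'_j = c. Then Σ_{j=0}^{m} |x'_j − x_j| ≤ √(2c · I(x'‖x)) = √(I(W(x')‖W(x))). -/

import Mathlib

open Finset Filter

/-- Extension of `x : Fin (m+1) → ℝ` to `ℕ`, zero outside `[0, m]`. -/
def ext (m : ℕ) (x : Fin (m + 1) → ℝ) (k : ℕ) : ℝ :=
  if h : k < m + 1 then x ⟨k, h⟩ else 0

/-- Autoconvolution `(x*x)_i = ∑_{j=0}^{i} x_{i-j} x_j`. -/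
def aconv (m : ℕ) (x : Fin (m + 1) → ℝ) : Fin (2 * m + 1) → ℝ :=
  fun i => ∑ j ∈ Finset.range (i.1 + 1), ext m x (i.1 - j) * ext m x j

/-- The index `ℓ + j ∈ {0,…,2m}` for `ℓ, j ∈ {0,…,m}`. -/
def idx (m : ℕ) (ℓ j : Fin (m + 1)) : Fin (2 * m + 1) :=
  ⟨ℓ.1 + j.1, by have h1 := ℓ.isLt; have h2 := j.isLt; omega⟩

/-- One term of the I-divergence, with values in `[0,∞]`, with the conventions
`0·log(0/b) = 0` and value `∞` if `a > 0 = b`. -/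
noncomputable def termDiv (a b : ℝ) : ENNReal :=
  if a = 0 then ENNReal.ofReal b
  else if b = 0 then ⊤
  else ENNReal.ofReal (a * Real.log (a / b) - a + b)

/-- `[0,∞]`-valued I-divergence between vectors. -/
noncomputable def Idiv {n : ℕ} (u v : Fin n → ℝ) : ENNReal :=
  ∑ i, termDiv (u i) (v i)

/-- Real-valued I-divergence between vectors (used when the second argument is
positive wherever the first one is). -/
noncomputable def IdivR {n : ℕ} (u v : Fin n → ℝ) : ℝ :=
  ∑ i, (u i * Real.log (u i / v i) - u i + v i)

/-- `[0,∞]`-valued I-divergence between `(2m+1) × (m+1)` matrices. -/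
noncomputable def IdivM (m : ℕ) (M N : Fin (2 * m + 1) → Fin (m + 1) → ℝ) : ENNReal :=
  ∑ i, ∑ j, termDiv (M i j) (N i j)

/-- Real-valued I-divergence between `(2m+1) × (m+1)` matrices. -/
noncomputable def IdivMR (m : ℕ) (M N : Fin (2 * m + 1) → Fin (m + 1) → ℝ) : ℝ :=
  ∑ i, ∑ j, (M i j * Real.log (M i j / N i j) - M i j + N i j)

/-- The set 𝒴: nonnegative matrices supported on `{(i,j) : j ≤ i ≤ j+m}` with row sums `y`. -/
def calY (m : ℕ) (y : Fin (2 * m + 1) → ℝ) (Y : Fin (2 * m + 1) → Fin (m + 1) → ℝ) : Prop :=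
  (∀ i j, 0 ≤ Y i j) ∧
  (∀ (i : Fin (2 * m + 1)) (j : Fin (m + 1)), ¬(j.1 ≤ i.1 ∧ i.1 ≤ j.1 + m) → Y i j = 0) ∧
  (∀ i, ∑ j, Y i j = y i)

/-- The matrix `W(x)` with `W(x)_{ij} = x_{i-j} x_j` on the support and `0` elsewhere. -/
def Wmat (m : ℕ) (x : Fin (m + 1) → ℝ) (i : Fin (2 * m + 1)) (j : Fin (m + 1)) : ℝ :=
  if h : j.1 ≤ i.1 ∧ i.1 ≤ j.1 + m then x ⟨i.1 - j.1, by omega⟩ * x j else 0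

/-- The matrix `Y*(x)` with `Y*(x)_{ij} = (x_{i-j} x_j/(x*x)_i)·y_i` on the support. -/
noncomputable def Ystar (m : ℕ) (y : Fin (2 * m + 1) → ℝ) (x : Fin (m + 1) → ℝ)
    (i : Fin (2 * m + 1)) (j : Fin (m + 1)) : ℝ :=
  if h : j.1 ≤ i.1 ∧ i.1 ≤ j.1 + m then
    x ⟨i.1 - j.1, by omega⟩ * x j / aconv m x i * y i
  else 0

/-- `Ŷ_j = ∑_{i=0}^{m} Y_{i+j,i} + ∑_{i=j}^{j+m} Y_{ij}`. -/
def Yhat (m : ℕ) (Y : Fin (2 * m + 1) → Fin (m + 1) → ℝ) (j : Fin (m + 1)) : ℝ :=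
  (∑ ℓ : Fin (m + 1), Y (idx m ℓ j) ℓ) + ∑ ℓ : Fin (m + 1), Y (idx m ℓ j) j

/-- The algorithm map `T(x)_j = x_j (1/c) ∑_ℓ x_ℓ y_{ℓ+j}/(x*x)_{ℓ+j}`,
with `c = √(∑ y_i)`. -/
noncomputable def Tmap (m : ℕ) (y : Fin (2 * m + 1) → ℝ) (x : Fin (m + 1) → ℝ)
    (j : Fin (m + 1)) : ℝ :=
  x j * (1 / Real.sqrt (∑ i, y i)) * ∑ ℓ, x ℓ * y (idx m ℓ j) / aconv m x (idx m ℓ j)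

/-- The gradient `∇_j I(x) = 2 ∑_ℓ ( x_ℓ − x_ℓ y_{ℓ+j}/(x*x)_{ℓ+j} )`. -/
noncomputable def gradI (m : ℕ) (y : Fin (2 * m + 1) → ℝ) (x : Fin (m + 1) → ℝ)
    (j : Fin (m + 1)) : ℝ :=
  2 * ∑ ℓ, (x ℓ - x ℓ * y (idx m ℓ j) / aconv m x (idx m ℓ j))


noncomputable def gfun (t : ℝ) : ℝ := (2*t+4)*(t*Real.log t - t + 1) - 3*(t-1)^2

lemma gfun_hasDeriv {t : ℝ} (ht : 0 < t) :
    HasDerivAt gfun (4*((t+1)*Real.log t - 2*(t-1))) t := by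
  have h1 : HasDerivAt (fun t : ℝ => t * Real.log t) (Real.log t + 1) t :=
    Real.hasDerivAt_mul_log ht.ne'
  have h2 : HasDerivAt (fun t : ℝ => 2*t+4) 2 t := by
    simpa using ((hasDerivAt_id t).const_mul 2).add_const 4
  have hu : HasDerivAt (fun t : ℝ => t*Real.log t - t + 1) (Real.log t) t := by
    simpa using (h1.sub (hasDerivAt_id t)).add_const 1
  have hq : HasDerivAt (fun t : ℝ => (t-1)^2) (2*(t-1)) t := by
    simpa using ((hasDerivAt_id t).sub_const 1).fun_pow 2
  have := (h2.fun_mul hu).fun_sub (hq.const_mul 3)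
  exact this.congr_deriv (by ring)

lemma hfun_nonneg_aux {t : ℝ} (ht : 0 < t) : 0 ≤ Real.log t + 1/t - 1 := by
  have := Real.log_le_sub_one_of_pos (inv_pos.2 ht)
  rw [Real.log_inv] at this
  have : -Real.log t ≤ 1/t - 1 := by rw [one_div]; linarith
  linarith

lemma hfun_mono : MonotoneOn (fun t => (t+1)*Real.log t - 2*(t-1)) (Set.Ioi (0:ℝ)) := by
  have hd : ∀ t ∈ Set.Ioi (0:ℝ), HasDerivAt (fun t : ℝ => (t+1)*Real.log t - 2*(t-1))
      (Real.log t + (t+1)/t - 2) t := by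
    intro t ht
    have ht' : (0:ℝ) < t := ht
    have h1 : HasDerivAt (fun t : ℝ => (t+1)*Real.log t) (Real.log t + (t+1)/t) t := by
      have := (((hasDerivAt_id t).add_const 1).fun_mul (Real.hasDerivAt_log ht'.ne'))
      exact this.congr_deriv (by simp [div_eq_mul_inv])
    have h2 : HasDerivAt (fun t : ℝ => 2*(t-1)) 2 t := by
      simpa using ((hasDerivAt_id t).sub_const 1).const_mul 2
    simpa using h1.fun_sub h2
  apply monotoneOn_of_hasDerivWithinAt_nonneg (convex_Ioi 0)
    (f' := fun t => Real.log t + (t+1)/t - 2)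
  · intro t ht
    exact (hd t ht).continuousAt.continuousWithinAt
  · intro t ht
    rw [interior_Ioi] at ht
    exact (hd t ht).hasDerivWithinAt
  · intro t ht
    rw [interior_Ioi] at ht
    have ht' : (0:ℝ) < t := ht
    have h0 := hfun_nonneg_aux ht'
    have : (t+1)/t = 1 + 1/t := by field_simp
    rw [this]; linarith

lemma gfun_nonneg {t : ℝ} (ht : 0 < t) : 0 ≤ gfun t := by
  have hg1 : gfun 1 = 0 := by simp [gfun]
  have hcont : ∀ s ∈ Set.Ioi (0:ℝ), ContinuousWithinAt gfun (Set.Ioi 0) s := by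
    intro s hs
    exact (gfun_hasDeriv hs).continuousAt.continuousWithinAt
  have hsign : ∀ s : ℝ, 0 < s → ((1 ≤ s → 0 ≤ 4*((s+1)*Real.log s - 2*(s-1))) ∧
      (s ≤ 1 → 4*((s+1)*Real.log s - 2*(s-1)) ≤ 0)) := by
    intro s hs
    have h1 : ((1:ℝ)+1)*Real.log 1 - 2*(1-1) = 0 := by simp
    constructor
    · intro h
      have := hfun_mono (Set.mem_Ioi.2 one_pos) (Set.mem_Ioi.2 hs) h
      simp only at this
      rw [h1] at this
      linarith
    · intro h
      have := hfun_mono (Set.mem_Ioi.2 hs) (Set.mem_Ioi.2 one_pos) h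
      simp only at this
      rw [h1] at this
      linarith
  rcases le_total t 1 with h | h
  · -- antitone on Set.Ioc 0 1
    have hanti : AntitoneOn gfun (Set.Ioc (0:ℝ) 1) := by
      apply antitoneOn_of_hasDerivWithinAt_nonpos (convex_Ioc 0 1)
        (f' := fun s => 4*((s+1)*Real.log s - 2*(s-1)))
      · intro s hs; exact (gfun_hasDeriv hs.1).continuousAt.continuousWithinAt
      · intro s hs
        rw [interior_Ioc] at hs
        exact (gfun_hasDeriv hs.1).hasDerivWithinAt
      · intro s hs
        rw [interior_Ioc] at hs
        exact ((hsign s hs.1).2 hs.2.le)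
    have := hanti (Set.mem_Ioc.2 ⟨ht, h⟩) (Set.mem_Ioc.2 ⟨one_pos, le_refl 1⟩) h
    rw [hg1] at this; exact this
  · have hmono : MonotoneOn gfun (Set.Ici (1:ℝ)) := by
      apply monotoneOn_of_hasDerivWithinAt_nonneg (convex_Ici 1)
        (f' := fun s => 4*((s+1)*Real.log s - 2*(s-1)))
      · intro s hs
        exact (gfun_hasDeriv (lt_of_lt_of_le one_pos hs)).continuousAt.continuousWithinAt
      · intro s hs
        rw [interior_Ici] at hs
        exact (gfun_hasDeriv (lt_trans one_pos hs)).hasDerivWithinAt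
      · intro s hs
        rw [interior_Ici] at hs
        exact ((hsign s (lt_trans one_pos hs)).1 hs.le)
    have := hmono (Set.mem_Ici.2 (le_refl 1)) (Set.mem_Ici.2 h) h
    rw [hg1] at this; exact this

lemma key_ineq {a b : ℝ} (ha : 0 < a) (hb : 0 < b) :
    3*(a-b)^2 ≤ (2*a+4*b)*(a*Real.log (a/b) - a + b) := by
  have ht : 0 < a/b := div_pos ha hb
  have hg := gfun_nonneg ht
  unfold gfun at hg
  have hb2 : (0:ℝ) < b^2 := by positivity
  have := mul_le_mul_of_nonneg_left hg hb2.le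
  rw [mul_zero] at this
  calc 3*(a-b)^2 = b^2 * (3*(a/b-1)^2) := by field_simp
    _ ≤ b^2 * ((2*(a/b)+4)*((a/b)*Real.log (a/b) - a/b + 1)) := by linarith
    _ = (2*a+4*b)*(a*Real.log (a/b) - a + b) := by field_simp

lemma dterm_nonneg {a b : ℝ} (ha : 0 < a) (hb : 0 < b) :
    0 ≤ a*Real.log (a/b) - a + b := by
  have h := key_ineq ha hb
  nlinarith [sq_nonneg (a-b)]

lemma pinsker_sum {n : ℕ} (c : ℝ) (x x' : Fin n → ℝ) (hx : ∀ j, 0 < x j) (hx' : ∀ j, 0 < x' j)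
    (hsx : ∑ j, x j = c) (hsx' : ∑ j, x' j = c) :
    (∑ j, |x' j - x j|) ≤ Real.sqrt (2 * c * IdivR x' x) := by
  set d : Fin n → ℝ := fun j => x' j * Real.log (x' j / x j) - x' j + x j with hd
  set w : Fin n → ℝ := fun j => (2*x' j + 4*x j)/3 with hw
  have hd0 : ∀ j, 0 ≤ d j := fun j => dterm_nonneg (hx' j) (hx j)
  have hw0 : ∀ j, 0 ≤ w j := by
    intro j; have := (hx j).le; have := (hx' j).le; simp only [hw]; positivity
  have step1 : ∀ j, |x' j - x j| ≤ Real.sqrt (w j) * Real.sqrt (d j) := by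
    intro j
    rw [← Real.sqrt_mul (hw0 j)]
    apply Real.abs_le_sqrt
    have := key_ineq (hx' j) (hx j)
    simp only [hw, hd]
    nlinarith [this]
  calc (∑ j, |x' j - x j|) ≤ ∑ j, Real.sqrt (w j) * Real.sqrt (d j) :=
        Finset.sum_le_sum (fun j _ => step1 j)
    _ ≤ Real.sqrt (∑ j, w j) * Real.sqrt (∑ j, d j) :=
        Real.sum_sqrt_mul_sqrt_le _ hw0 hd0
    _ = Real.sqrt (2 * c * IdivR x' x) := by
        rw [← Real.sqrt_mul (Finset.sum_nonneg (fun j _ => hw0 j))]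
        congr 1
        have h1 : ∑ j, w j = 2*c := by
          simp only [hw]
          rw [← Finset.sum_div, Finset.sum_add_distrib, ← Finset.mul_sum, ← Finset.mul_sum,
            hsx, hsx']
          ring
        have h2 : ∑ j, d j = IdivR x' x := by simp [hd, IdivR]
        rw [h1, h2]

lemma sum_over_support (m : ℕ) (F : Fin (2*m+1) → Fin (m+1) → ℝ)
    (hF : ∀ i j, ¬(j.1 ≤ i.1 ∧ i.1 ≤ j.1 + m) → F i j = 0) (j : Fin (m+1)) :
    ∑ i, F i j = ∑ ℓ : Fin (m+1), F (idx m ℓ j) j := by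
  have hinj : ∀ a ∈ (Finset.univ : Finset (Fin (m+1))), ∀ b ∈ Finset.univ,
      idx m a j = idx m b j → a = b := by
    intro a _ b _ hab
    have := congrArg Fin.val hab
    simp only [idx] at this
    exact Fin.ext (by omega)
  have h1 : ∑ i ∈ Finset.univ.image (fun ℓ : Fin (m+1) => idx m ℓ j), F i j
      = ∑ ℓ, F (idx m ℓ j) j := Finset.sum_image hinj
  have h2 : ∑ i ∈ Finset.univ.image (fun ℓ : Fin (m+1) => idx m ℓ j), F i j
      = ∑ i, F i j := by
    apply Finset.sum_subset (Finset.subset_univ _)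
    intro i _ hi
    apply hF
    intro hcon
    apply hi
    apply Finset.mem_image.2
    refine ⟨⟨i.1 - j.1, by omega⟩, Finset.mem_univ _, ?_⟩
    apply Fin.ext
    simp only [idx]
    omega
  rw [← h2, h1]

lemma wmat_idx (m : ℕ) (z : Fin (m+1) → ℝ) (ℓ j : Fin (m+1)) :
    Wmat m z (idx m ℓ j) j = z ℓ * z j := by
  have h : j.1 ≤ (idx m ℓ j).1 ∧ (idx m ℓ j).1 ≤ j.1 + m := by
    simp only [idx]; omega
  rw [Wmat, dif_pos h]
  congr 2
  apply Fin.ext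
  simp [idx]

lemma idivMR_eq (m : ℕ) (c : ℝ) (x x' : Fin (m + 1) → ℝ)
    (hx : ∀ j, 0 < x j) (hx' : ∀ j, 0 < x' j)
    (hsx : ∑ j, x j = c) (hsx' : ∑ j, x' j = c) :
    IdivMR m (Wmat m x') (Wmat m x) = 2 * c * IdivR x' x := by
  set F : Fin (2*m+1) → Fin (m+1) → ℝ := fun i j =>
    Wmat m x' i j * Real.log (Wmat m x' i j / Wmat m x i j) - Wmat m x' i j + Wmat m x i j
    with hF
  have hF0 : ∀ i j, ¬(j.1 ≤ i.1 ∧ i.1 ≤ j.1 + m) → F i j = 0 := by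
    intro i j h
    simp [hF, Wmat, dif_neg h]
  have hstep : IdivMR m (Wmat m x') (Wmat m x) = ∑ j, ∑ ℓ : Fin (m+1), F (idx m ℓ j) j := by
    rw [IdivMR, Finset.sum_comm]
    exact Finset.sum_congr rfl (fun j _ => sum_over_support m F hF0 j)
  rw [hstep]
  set L : Fin (m+1) → ℝ := fun k => Real.log (x' k / x k) with hL
  have hterm : ∀ ℓ j : Fin (m+1), F (idx m ℓ j) j
      = (x' ℓ * L ℓ) * x' j + x' ℓ * (x' j * L j) - x' ℓ * x' j + x ℓ * x j := by
    intro ℓ j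
    simp only [hF, wmat_idx]
    have hlog : Real.log (x' ℓ * x' j / (x ℓ * x j)) = L ℓ + L j := by
      rw [← div_mul_div_comm, hL]
      exact Real.log_mul (div_pos (hx' _) (hx _)).ne' (div_pos (hx' _) (hx _)).ne'
    rw [hlog]
    ring
  simp only [hterm]
  have hinner : ∀ j : Fin (m+1), ∑ ℓ, ((x' ℓ * L ℓ) * x' j + x' ℓ * (x' j * L j)
      - x' ℓ * x' j + x ℓ * x j)
      = (∑ k, x' k * L k) * x' j + c * (x' j * L j) - c * x' j + c * x j := by
    intro j
    simp only [Finset.sum_add_distrib, Finset.sum_sub_distrib, ← Finset.sum_mul, hsx, hsx']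
  simp only [hinner]
  have hIdiv : IdivR x' x = ∑ k, x' k * L k := by
    have hk : ∀ k : Fin (m+1), x' k * Real.log (x' k / x k) - x' k + x k
        = x' k * L k - x' k + x k := fun k => rfl
    rw [IdivR]
    simp only [hk, Finset.sum_add_distrib, Finset.sum_sub_distrib, hsx, hsx']
    ring
  calc ∑ j, ((∑ k, x' k * L k) * x' j + c * (x' j * L j) - c * x' j + c * x j)
      = (∑ k, x' k * L k) * (∑ j, x' j) + c * (∑ j, x' j * L j) - c * (∑ j, x' j)
        + c * (∑ j, x j) := by
        simp only [Finset.sum_add_distrib, Finset.sum_sub_distrib, ← Finset.mul_sum]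
    _ = 2 * c * IdivR x' x := by rw [hsx, hsx', hIdiv]; ring

/-- Pinsker-type bound
`∑ |x'_j − x_j| ≤ √(2c·I(x'‖x)) = √(I(W(x')‖W(x)))`. -/
theorem stmt14 (m : ℕ) (c : ℝ) (hc : 0 < c)
    (x x' : Fin (m + 1) → ℝ) (hx : ∀ j, 0 < x j) (hx' : ∀ j, 0 < x' j)
    (hsx : ∑ j, x j = c) (hsx' : ∑ j, x' j = c) :
    (∑ j, |x' j - x j|) ≤ Real.sqrt (2 * c * IdivR x' x) ∧
    Real.sqrt (2 * c * IdivR x' x) =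
      Real.sqrt (IdivMR m (Wmat m x') (Wmat m x)) := by
  constructor
  · exact pinsker_sum c x x' hx hx' hsx hsx'
  · rw [idivMR_eq m c x x' hx hx' hsx hsx']
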